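/- arXiv:1608.08156 — 2 statements merged into one kernel-verified Lean document; each statement's English description precedes it below -/
import Mathlib

section
/- Let K be an infinite perfect field of characteristic p > 0, S = K[x,y,z,w], and set f ∈ S by F_*f = F_*((xyz)^{p-1}) · [ x·F_*(w^{p-1}) + y^{p-1}z·F_*(w^{p-2}) + y^{p-2}z^2·F_*(w^{p-3}) + ... + y z^{p-1} ], i.e., f = (xyz)^{p-1} · ( x^p w^{p-1} + (y^{p-1}z)^p w^{p-2} + ... + (yz^{p-1})^p ). Then the ideal τ(f) := Φ(F_*(f·S)) equals ⟨x, y^{p-1}z, y^{p-2}z^2, ..., y z^{p-1}⟩. -/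
open MvPolynomial

/-- For `F_*S` free over `S = K[x_1,…,x_n]` with basis `{F_*(x^α) : α ∈ {0,…,p-1}^n}`,
`frobCoeff p α f` is the coefficient `s_α ∈ S` in the expansion
`F_*f = Σ_α s_α • F_*(x^α)`, i.e. `f = Σ_α s_α^p x^α`. -/
noncomputable def frobCoeff {K : Type*} [Field K] (p : ℕ) [Fact p.Prime] [ExpChar K p]
    [PerfectRing K p] {n : ℕ} (α : Fin n → ℕ) (f : MvPolynomial (Fin n) K) :
    MvPolynomial (Fin n) K :=
  ∑ d ∈ f.support,
    if ∀ i, d i % p = α i then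
      monomial (Finsupp.mapRange (· / p) (Nat.zero_div p) d)
        ((frobeniusEquiv K p).symm (f.coeff d))
    else 0

/-- The generating trace map `Φ : F_*S → S`, the `S`-linear projection onto the
coefficient of `F_*(x_1^(p-1) ⋯ x_n^(p-1))`. -/
noncomputable def phi {K : Type*} [Field K] (p : ℕ) [Fact p.Prime] [ExpChar K p]
    [PerfectRing K p] {n : ℕ} (f : MvPolynomial (Fin n) K) : MvPolynomial (Fin n) K :=
  frobCoeff p (fun _ => p - 1) f

/-- The ideal `Φ(F_*(f•S)) = {Φ(F_*(f•h)) : h ∈ S}`, which computes the test ideal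
`τ(S, f^(1/p))`. -/
noncomputable def tauP {K : Type*} [Field K] (p : ℕ) [Fact p.Prime] [ExpChar K p]
    [PerfectRing K p] {n : ℕ} (f : MvPolynomial (Fin n) K) : Ideal (MvPolynomial (Fin n) K) :=
  Ideal.span {g | ∃ h, g = phi p (f * h)}

/-- The polynomials `f_(p-1) = x`, `f_j = y^(j+1) z^(p-1-j)` for `j < p-1` (so
`f_(p-1-i) = y^(p-i) z^i`), in `S = K[x,y,z,w]` with `x = X 0`, `y = X 1`, `z = X 2`,
`w = X 3`. -/
noncomputable def fCoeff {K : Type*} [Field K] (p j : ℕ) : MvPolynomial (Fin 4) K :=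
  if j = p - 1 then X 0 else X 1 ^ (j + 1) * X 2 ^ (p - 1 - j)

/-- The 4-dimensional example
`f = (xyz)^(p-1) ( x^p w^(p-1) + (y^(p-1)z)^p w^(p-2) + … + (yz^(p-1))^p )`,
i.e. `F_*f = F_*((xyz)^(p-1))·[x F_*(w^(p-1)) + y^(p-1)z F_*(w^(p-2)) + … + yz^(p-1)]`. -/
noncomputable def fDim4 {K : Type*} [Field K] (p : ℕ) : MvPolynomial (Fin 4) K :=
  (X 0 * X 1 * X 2) ^ (p - 1) * ∑ j ∈ Finset.range p, fCoeff p j ^ p * X 3 ^ j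

section Aux
variable {K : Type*} [Field K] (p : ℕ) [Fact p.Prime] [ExpChar K p] [PerfectRing K p] {n : ℕ}

lemma my_phi_monomial (d : Fin n →₀ ℕ) (c : K) :
    phi p (monomial d c) =
      if ∀ i, d i % p = p - 1 then
        monomial (Finsupp.mapRange (· / p) (Nat.zero_div p) d) ((frobeniusEquiv K p).symm c)
      else 0 := by
  classical
  unfold phi frobCoeff
  rcases eq_or_ne c 0 with rfl | hc
  · simp [support_monomial]
  · rw [support_monomial, if_neg hc, Finset.sum_singleton, coeff_monomial, if_pos rfl]

lemma my_frobCoeff_sum (α : Fin n → ℕ) (f : MvPolynomial (Fin n) K) :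
    frobCoeff p α f = Finsupp.sum (AddMonoidAlgebra.coeff f) (fun d c =>
      if ∀ i, d i % p = α i then
        monomial (Finsupp.mapRange (· / p) (Nat.zero_div p) d)
          ((frobeniusEquiv K p).symm c)
      else 0) := rfl

lemma my_phi_add (f g : MvPolynomial (Fin n) K) : phi p (f + g) = phi p f + phi p g := by
  unfold phi
  rw [my_frobCoeff_sum, my_frobCoeff_sum, my_frobCoeff_sum, AddMonoidAlgebra.coeff_add]
  refine Finsupp.sum_add_index' ?_ ?_
  · intro d; split_ifs <;> simp
  · intro d c1 c2; split_ifs <;> simp [map_add]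

noncomputable def phiAddHom : MvPolynomial (Fin n) K →+ MvPolynomial (Fin n) K where
  toFun := phi p
  map_zero' := by unfold phi frobCoeff; simp
  map_add' := my_phi_add p

end Aux

section Aux2
variable {K : Type*} [Field K] (p : ℕ) [Fact p.Prime] [ExpChar K p] [PerfectRing K p]

def uFun (p j : ℕ) : Fin 4 → ℕ :=
  ![if j = p - 1 then 1 else 0, if j = p - 1 then 0 else j + 1,
    if j = p - 1 then 0 else p - 1 - j, 0]

noncomputable def uVec (p j : ℕ) : Fin 4 →₀ ℕ := Finsupp.equivFunOnFinite.symm (uFun p j)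

noncomputable def eVec (p j : ℕ) : Fin 4 →₀ ℕ :=
  Finsupp.equivFunOnFinite.symm (fun i => (if i = 3 then j else p - 1) + p * uFun p j i)

@[simp] lemma uVec_apply (j : ℕ) (i : Fin 4) : uVec p j i = uFun p j i := rfl

@[simp] lemma eVec_apply (j : ℕ) (i : Fin 4) :
    eVec p j i = (if i = 3 then j else p - 1) + p * uFun p j i := rfl

lemma fCoeff_eq (j : ℕ) : fCoeff (K := K) p j = monomial (uVec p j) 1 := by
  unfold fCoeff
  split_ifs with h
  · have hu : uVec p j = Finsupp.single 0 1 := by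
      ext i; fin_cases i <;> simp [uVec, uFun, h, Finsupp.single_apply]
    rw [hu]; rfl
  · have hu : uVec p j = Finsupp.single 1 (j + 1) + Finsupp.single 2 (p - 1 - j) := by
      ext i; fin_cases i <;> simp [uVec, uFun, h, Finsupp.single_apply]
    rw [hu, X_pow_eq_monomial, X_pow_eq_monomial, monomial_mul, one_mul]

lemma fDim4_mul_monomial (d : Fin 4 →₀ ℕ) (c : K) :
    fDim4 (K := K) p * monomial d c = ∑ j ∈ Finset.range p, monomial (eVec p j + d) c := by
  unfold fDim4
  rw [Finset.mul_sum, Finset.sum_mul]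
  refine Finset.sum_congr rfl fun j hj => ?_
  rw [fCoeff_eq, monomial_pow, mul_pow, mul_pow, X_pow_eq_monomial, X_pow_eq_monomial,
    X_pow_eq_monomial, X_pow_eq_monomial, monomial_mul, monomial_mul, monomial_mul,
    monomial_mul, monomial_mul]
  simp only [one_mul, one_pow, mul_one]
  refine (monomial_eq_monomial_iff _ _ _ _).mpr (Or.inl ⟨?_, rfl⟩)
  ext i
  fin_cases i <;>
      simp [eVec, uVec, Finsupp.single_apply, mul_comm] <;>
    ring

end Aux2

section Aux3
variable {K : Type*} [Field K] (p : ℕ) [Fact p.Prime] [ExpChar K p] [PerfectRing K p]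

lemma term_mem_span (j : ℕ) (hj : j < p) (d : Fin 4 →₀ ℕ) (c : K) :
    phi p (monomial (eVec p j + d) c) ∈
      Ideal.span (Set.range fun j : Fin p => fCoeff (K := K) p j) := by
  rw [my_phi_monomial]
  split_ifs with h
  · have hp : 0 < p := (Fact.out : p.Prime).pos
    have hle : uVec p j ≤ Finsupp.mapRange (· / p) (Nat.zero_div p) (eVec p j + d) := by
      rw [Finsupp.le_def]
      intro i
      rw [Finsupp.mapRange_apply, Finsupp.add_apply, eVec_apply, uVec_apply,
        Nat.le_div_iff_mul_le hp, mul_comm (uFun p j i) p]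
      exact le_trans (Nat.le_add_left _ _) (Nat.le_add_right _ _)
    rw [show Finsupp.mapRange (· / p) (Nat.zero_div p) (eVec p j + d)
          = (Finsupp.mapRange (· / p) (Nat.zero_div p) (eVec p j + d) - uVec p j) + uVec p j from
        (tsub_add_cancel_of_le hle).symm,
      ← mul_one ((frobeniusEquiv K p).symm c), ← monomial_mul, ← fCoeff_eq]
    exact Ideal.mul_mem_left _ _ (Ideal.subset_span ⟨⟨j, hj⟩, rfl⟩)
  · exact Ideal.zero_mem _

lemma phi_fDim4_mul (h : MvPolynomial (Fin 4) K) :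
    phi p (fDim4 (K := K) p * h) ∈
      Ideal.span (Set.range fun j : Fin p => fCoeff (K := K) p j) := by
  induction h using MvPolynomial.induction_on' with
  | monomial d c =>
      rw [fDim4_mul_monomial,
        show phi p (∑ j ∈ Finset.range p, monomial (eVec p j + d) c)
            = ∑ j ∈ Finset.range p, phi p (monomial (eVec p j + d) c) from
          map_sum (phiAddHom p) _ _]
      exact Ideal.sum_mem _ fun j hj => term_mem_span p j (Finset.mem_range.mp hj) d c
  | add f g hf hg =>
      rw [mul_add, my_phi_add]
      exact Ideal.add_mem _ hf hg

lemma gen_mem (j : ℕ) (hj : j < p) :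
    fCoeff (K := K) p j
      = phi p (fDim4 (K := K) p * monomial (Finsupp.single 3 (p - 1 - j)) 1) := by
  have hp : 0 < p := (Fact.out : p.Prime).pos
  rw [fDim4_mul_monomial,
    show phi p (∑ i ∈ Finset.range p, monomial (eVec p i + Finsupp.single 3 (p - 1 - j)) (1 : K))
        = ∑ i ∈ Finset.range p, phi p (monomial (eVec p i + Finsupp.single 3 (p - 1 - j)) (1 : K))
      from map_sum (phiAddHom p) _ _,
    Finset.sum_eq_single j
      (fun i hi hij => by
        have hi' : i < p := Finset.mem_range.mp hi
        rw [my_phi_monomial, if_neg]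
        intro hcond
        have h3 := hcond 3
        rw [Finsupp.add_apply, eVec_apply, Finsupp.single_apply] at h3
        simp only [if_pos rfl, uFun, Matrix.cons_val_three, Matrix.cons_val_zero,
          Matrix.cons_val_one, Matrix.head_cons, Matrix.tail_cons, mul_zero, add_zero, if_true] at h3
        rcases lt_or_ge (i + (p - 1 - j)) p with hv | hv
        · rw [Nat.mod_eq_of_lt hv] at h3; omega
        · rw [Nat.mod_eq_sub_mod hv, Nat.mod_eq_of_lt (by omega)] at h3; omega)
      (fun hjj => absurd (Finset.mem_range.mpr hj) hjj)]
  rw [my_phi_monomial, if_pos, map_one, fCoeff_eq]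
  · refine ((monomial_eq_monomial_iff _ _ _ _).mpr (Or.inl ⟨?_, rfl⟩)).symm
    ext a
    rw [Finsupp.mapRange_apply, Finsupp.add_apply, eVec_apply, Finsupp.single_apply, uVec_apply]
    fin_cases a <;> simp [uFun, Finsupp.single_apply]
    · split_ifs
      · rw [Nat.add_div_right _ hp, Nat.div_eq_of_lt (by omega)]
      · rw [add_zero, Nat.div_eq_of_lt (by omega)]
    · split_ifs
      · rw [add_zero, Nat.div_eq_of_lt (by omega)]
      · rw [Nat.add_mul_div_left _ _ hp, Nat.div_eq_of_lt (by omega), zero_add]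
    · split_ifs
      · rw [add_zero, Nat.div_eq_of_lt (by omega)]
      · rw [Nat.add_mul_div_left _ _ hp, Nat.div_eq_of_lt (by omega), zero_add]
    · rw [show j + (p - 1 - j) = p - 1 by omega]; omega
  · intro a
    rw [Finsupp.add_apply, eVec_apply, Finsupp.single_apply]
    fin_cases a <;> simp [uFun, Finsupp.single_apply] <;> (try split_ifs) <;>
      first
        | rw [Nat.add_mod_right, Nat.mod_eq_of_lt (by omega)]
        | rw [add_zero, Nat.mod_eq_of_lt (by omega)]
        | rw [Nat.add_mul_mod_self_left, Nat.mod_eq_of_lt (by omega)]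
        | rw [show j + (p - 1 - j) = p - 1 by omega, Nat.mod_eq_of_lt (by omega)]

end Aux3

/-- for the 4-dimensional example `f`, the test ideal
`τ(f) = Φ(F_*(f·S))` equals `⟨x, y^(p-1)z, y^(p-2)z^2, …, yz^(p-1)⟩`. -/
theorem statement3 {K : Type*} [Field K] [Infinite K] (p : ℕ) [Fact p.Prime] [ExpChar K p]
    [PerfectRing K p] :
    tauP p (fDim4 (K := K) p) =
      Ideal.span (Set.range fun j : Fin p => fCoeff (K := K) p j) := by
  apply le_antisymm
  · refine Ideal.span_le.mpr ?_
    rintro g ⟨h, rfl⟩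
    exact phi_fDim4_mul p h
  · refine Ideal.span_le.mpr ?_
    rintro g ⟨j, rfl⟩
    exact Ideal.subset_span ⟨monomial (Finsupp.single 3 (p - 1 - (j : ℕ))) 1, gen_mem p j j.isLt⟩
end

section
/- Let K be an infinite perfect field of characteristic p > 0, S = K[x,y,z,w], and f as in the 4-dimensional example (f = (xyz)^{p-1}·(x^p w^{p-1} + (y^{p-1}z)^p w^{p-2} + ... + (yz^{p-1})^p)). Let l = c_0 + c_x x + c_y y + c_z z + c_w w with all coefficients c_0, c_x, c_y, c_z, c_w ∈ K nonzero. Then Φ(F_*(f·S)) ≠ Φ(F_*(f·l·S)); in fact x ∈ Φ(F_*(f·S)) but x ∉ Φ(F_*(f·l·S)). -/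
open MvPolynomial

section General

variable {K : Type*} [Field K] (p : ℕ) [Fact p.Prime] [ExpChar K p] [PerfectRing K p] {n : ℕ}

/-- the exponent `(p-1, …, p-1)` as a finsupp -/
noncomputable def alF : Fin n →₀ ℕ := Finsupp.equivFunOnFinite.symm (fun _ => p - 1)

lemma alF_apply (i : Fin n) : (alF p : Fin n →₀ ℕ) i = p - 1 := rfl

lemma coeff_phi (m : Fin n →₀ ℕ) (f : MvPolynomial (Fin n) K) :
    coeff m (phi p f) = (frobeniusEquiv K p).symm (coeff (p • m + alF p) f) := by
  have hp : 0 < p := (Fact.out : p.Prime).pos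
  have happ : ∀ i : Fin n, (p • m + alF p : Fin n →₀ ℕ) i = p * m i + (p - 1) := by
    intro i; simp [alF_apply, Finsupp.add_apply, Finsupp.smul_apply, mul_comm]
  rw [phi, frobCoeff, coeff_sum]
  have step : ∀ d ∈ f.support,
      (coeff m (if ∀ i, d i % p = p - 1 then
        monomial (Finsupp.mapRange (· / p) (Nat.zero_div p) d)
          ((frobeniusEquiv K p).symm (f.coeff d)) else 0))
      = if d = p • m + alF p then (frobeniusEquiv K p).symm (f.coeff d) else 0 := by
    intro d _
    by_cases hd : d = p • m + alF p
    · subst hd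
      rw [if_pos, if_pos, coeff_monomial, if_pos]
      · ext i
        rw [Finsupp.mapRange_apply, happ i, Nat.mul_add_div hp, Nat.div_eq_of_lt (by omega),
          add_zero]
      · rfl
      · intro i
        rw [happ i, Nat.mul_add_mod, Nat.mod_eq_of_lt (by omega)]
    · rw [if_neg hd]
      by_cases hc : ∀ i, d i % p = p - 1
      · rw [if_pos hc, coeff_monomial, if_neg]
        intro hmr
        apply hd
        ext i
        have h1 : d i / p = m i := by
          rw [← hmr]; rw [Finsupp.mapRange_apply]
        rw [happ i, ← hc i, ← h1, Nat.div_add_mod]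
      · rw [if_neg hc, coeff_zero]
  rw [Finset.sum_congr rfl step, Finset.sum_ite_eq' f.support (p • m + alF p)]
  by_cases hmem : p • m + alF p ∈ f.support
  · rw [if_pos hmem]
  · rw [if_neg hmem, notMem_support_iff.mp hmem, map_zero]

lemma phi_zero : phi p (0 : MvPolynomial (Fin n) K) = 0 := by
  ext m; rw [coeff_phi, coeff_zero, coeff_zero, map_zero]

lemma phi_add (u v : MvPolynomial (Fin n) K) : phi p (u + v) = phi p u + phi p v := by
  ext m; rw [coeff_add, coeff_phi, coeff_phi, coeff_phi, coeff_add, map_add]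

lemma smul_add_alF_apply (m : Fin n →₀ ℕ) (i : Fin n) :
    (p • m + alF p : Fin n →₀ ℕ) i = p * m i + (p - 1) := by
  simp [alF_apply, Finsupp.add_apply, Finsupp.smul_apply, mul_comm]

lemma myCharP : CharP K p := by
  rcases ‹ExpChar K p› with _ | _
  · exact absurd (Fact.out : Nat.Prime 1) Nat.not_prime_one
  · assumption

lemma phi_C_mul (b : K) (u : MvPolynomial (Fin n) K) :
    phi p (C b * u) = C ((frobeniusEquiv K p).symm b) * phi p u := by
  ext m
  rw [coeff_phi, coeff_C_mul, coeff_C_mul, coeff_phi, map_mul]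

lemma phi_X_pow_mul (i : Fin n) (u : MvPolynomial (Fin n) K) :
    phi p (X i ^ p * u) = X i * phi p u := by
  classical
  have hp : 0 < p := (Fact.out : p.Prime).pos
  ext m
  rw [coeff_phi, X_pow_eq_monomial, coeff_monomial_mul', coeff_X_mul']
  by_cases hmi : i ∈ m.support
  · have hmi' : m i ≠ 0 := Finsupp.mem_support_iff.mp hmi
    have hle : Finsupp.single i p ≤ p • m + alF p := by
      rw [Finsupp.single_le_iff, smul_add_alF_apply]
      have h1 : p * 1 ≤ p * m i := Nat.mul_le_mul_left p (Nat.one_le_iff_ne_zero.mpr hmi')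
      omega
    rw [if_pos hle, if_pos hmi, one_mul, coeff_phi]
    have hidx : (p • m + alF p) - Finsupp.single i p
        = p • (m - Finsupp.single i 1) + alF p := by
      ext j
      rw [Finsupp.tsub_apply, smul_add_alF_apply, smul_add_alF_apply, Finsupp.single_apply]
      by_cases hji : i = j
      · subst hji
        rw [if_pos rfl, Finsupp.tsub_apply, Finsupp.single_apply, if_pos rfl]
        obtain ⟨k, hk⟩ := Nat.exists_eq_succ_of_ne_zero hmi'
        rw [hk]
        have h2 : p * (k+1) = p * k + p := by ring
        rw [Nat.succ_sub_one, h2]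
        omega
      · rw [if_neg hji, Finsupp.tsub_apply, Finsupp.single_apply, if_neg hji, Nat.sub_zero, Nat.sub_zero]
    rw [hidx]
  · have hmi' : m i = 0 := Finsupp.notMem_support_iff.mp hmi
    rw [if_neg hmi, if_neg, map_zero]
    rw [Finsupp.single_le_iff, smul_add_alF_apply, hmi', mul_zero]
    omega

lemma phi_pow_p_mul (s : MvPolynomial (Fin n) K) :
    ∀ u : MvPolynomial (Fin n) K, phi p (s ^ p * u) = s * phi p u := by
  haveI : CharP K p := myCharP p
  haveI : CharP (MvPolynomial (Fin n) K) p := inferInstance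
  induction s using MvPolynomial.induction_on with
  | C a =>
      intro u
      rw [← map_pow, phi_C_mul]
      congr 2
      rw [← frobenius_def, frobeniusEquiv_symm_apply_frobenius]
  | add f g hf hg =>
      intro u
      rw [add_pow_char, add_mul, phi_add, hf u, hg u, ← add_mul]
  | mul_X f i hf =>
      intro u
      rw [mul_pow, mul_assoc, hf (X i ^ p * u), phi_X_pow_mul, ← mul_assoc]

end General

section Span

variable {K : Type*} [Field K] (p : ℕ) [Fact p.Prime] [ExpChar K p] [PerfectRing K p] {n : ℕ}

/-- `Φ(F_*(F·S))` as an honest ideal. -/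
noncomputable def phiIdeal (F : MvPolynomial (Fin n) K) : Ideal (MvPolynomial (Fin n) K) where
  carrier := {g | ∃ h, g = phi p (F * h)}
  zero_mem' := ⟨0, by rw [mul_zero, phi_zero]⟩
  add_mem' := by
    rintro a b ⟨ha, rfl⟩ ⟨hb, rfl⟩
    exact ⟨ha + hb, by rw [mul_add, phi_add]⟩
  smul_mem' := by
    rintro c x ⟨hx, rfl⟩
    exact ⟨c ^ p * hx, by rw [smul_eq_mul, ← phi_pow_p_mul, mul_left_comm]⟩

lemma tauP_eq (F : MvPolynomial (Fin n) K) : tauP p F = phiIdeal p F := by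
  have : {g | ∃ h, g = phi p (F * h)} = ↑(phiIdeal p F) := rfl
  rw [tauP, this, Ideal.span_eq]

end Span

section Dim4

variable {K : Type*} [Field K] (p : ℕ) [Fact p.Prime] [ExpChar K p] [PerfectRing K p]

/-- explicit exponent vectors -/
noncomputable def V (a b c d : ℕ) : Fin 4 →₀ ℕ := Finsupp.equivFunOnFinite.symm ![a, b, c, d]

lemma V_apply0 (a b c d : ℕ) : V a b c d 0 = a := rfl
lemma V_apply1 (a b c d : ℕ) : V a b c d 1 = b := rfl
lemma V_apply2 (a b c d : ℕ) : V a b c d 2 = c := rfl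
lemma V_apply3 (a b c d : ℕ) : V a b c d 3 = d := rfl

lemma V_le_V {a b c d a' b' c' d' : ℕ} :
    V a b c d ≤ V a' b' c' d' ↔ a ≤ a' ∧ b ≤ b' ∧ c ≤ c' ∧ d ≤ d' := by
  rw [Finsupp.le_def]
  constructor
  · intro h; exact ⟨h 0, h 1, h 2, h 3⟩
  · rintro ⟨h0, h1, h2, h3⟩ i; fin_cases i <;> assumption

lemma V_sub_V (a b c d a' b' c' d' : ℕ) :
    V a b c d - V a' b' c' d' = V (a - a') (b - b') (c - c') (d - d') := by
  ext i; rw [Finsupp.tsub_apply]; fin_cases i <;> rfl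

lemma single3_eq_V (m : ℕ) : (Finsupp.single 3 m : Fin 4 →₀ ℕ) = V 0 0 0 m := by
  ext i; fin_cases i <;> simp [Finsupp.single_apply, V_apply0, V_apply1, V_apply2, V_apply3]

lemma single0_eq_V : (Finsupp.single 0 1 : Fin 4 →₀ ℕ) = V 1 0 0 0 := by
  ext i; fin_cases i <;> simp [Finsupp.single_apply, V_apply0, V_apply1, V_apply2, V_apply3]

lemma smul_V_add_alF (a b c d : ℕ) :
    p • V a b c d + alF p = V (p*a+(p-1)) (p*b+(p-1)) (p*c+(p-1)) (p*d+(p-1)) := by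
  ext i
  rw [smul_add_alF_apply]
  fin_cases i <;> rfl

/-- the exponents of the monomials of `fDim4` -/
noncomputable def S4 (j : ℕ) : Fin 4 →₀ ℕ :=
  if j = p - 1 then V (2*p-1) (p-1) (p-1) (p-1)
  else V (p-1) (p*(j+1)+(p-1)) (p*(p-1-j)+(p-1)) j

lemma fDim4_eq : fDim4 (K := K) p = ∑ j ∈ Finset.range p, monomial (S4 p j) 1 := by
  rw [fDim4, Finset.mul_sum]
  refine Finset.sum_congr rfl fun j hj => ?_
  rw [fCoeff, S4]
  by_cases hjp : j = p - 1
  · rw [if_pos hjp, if_pos hjp, hjp]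
    simp only [mul_pow, ← pow_mul, X_pow_eq_monomial, monomial_pow, one_pow,
      Finsupp.smul_single, smul_eq_mul, monomial_mul, one_mul, mul_one]
    rw [monomial_eq_monomial_iff]
    left
    refine ⟨?_, rfl⟩
    ext i
    fin_cases i <;> simp [Finsupp.single_apply, V] <;> omega
  · rw [if_neg hjp, if_neg hjp]
    simp only [mul_pow, ← pow_mul, X_pow_eq_monomial, monomial_pow, one_pow,
      Finsupp.smul_single, smul_eq_mul, monomial_mul, one_mul, mul_one]
    rw [monomial_eq_monomial_iff]
    left
    refine ⟨?_, rfl⟩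
    ext i
    have hd1 : p * (j+1) = p * j + p := by ring
    have hd2 : p * (p-1-j+1) = p * (p-1-j) + p := by ring
    fin_cases i <;> simp [Finsupp.single_apply, V] <;> omega

lemma coeff_fDim4_mul (N : Fin 4 →₀ ℕ) (v : MvPolynomial (Fin 4) K) :
    coeff N (fDim4 (K := K) p * v)
      = ∑ j ∈ Finset.range p, (if S4 p j ≤ N then coeff (N - S4 p j) v else 0) := by
  rw [fDim4_eq, Finset.sum_mul, coeff_sum]
  refine Finset.sum_congr rfl fun j hj => ?_
  rw [coeff_monomial_mul']
  split_ifs with h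
  · rw [one_mul]
  · rfl

lemma coeff_caseA (e : ℕ) (v : MvPolynomial (Fin 4) K) :
    coeff (V (2*p-1) (p-1) (p-1) (p*e+(p-1))) (fDim4 (K := K) p * v)
      = coeff (Finsupp.single 3 (p*e)) v := by
  have hp : 0 < p := (Fact.out : p.Prime).pos
  rw [coeff_fDim4_mul, Finset.sum_eq_single (p-1)]
  · rw [S4, if_pos rfl, if_pos]
    · congr 1
      rw [single3_eq_V, V_sub_V]
      congr 1 <;> omega
    · rw [V_le_V]
      exact ⟨le_refl _, le_refl _, le_refl _, Nat.le_add_left _ _⟩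
  · intro j hj hne
    rw [S4, if_neg hne, if_neg]
    rw [V_le_V]
    rintro ⟨-, h1, -, -⟩
    have : p * 1 ≤ p * (j+1) := Nat.mul_le_mul_left p (by omega)
    omega
  · intro habs
    exact absurd (Finset.mem_range.mpr (by omega)) habs

lemma coeff_caseB (r e : ℕ) (hr1 : 1 ≤ r) (hr2 : r ≤ p - 1) (v : MvPolynomial (Fin 4) K) :
    coeff (V (p-1) (p*(p-r)+(p-1)) (p*r+(p-1)) (p*e+(p-1))) (fDim4 (K := K) p * v)
      = coeff (Finsupp.single 3 (p*e+r)) v := by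
  have hp : 0 < p := (Fact.out : p.Prime).pos
  have hne : p-1-r ≠ p-1 := by omega
  have harith1 : (p-1-r)+1 = p-r := by omega
  have harith2 : p-1-(p-1-r) = r := by omega
  rw [coeff_fDim4_mul, Finset.sum_eq_single (p-1-r)]
  · rw [S4, if_neg hne, harith1, harith2, if_pos]
    · congr 1
      rw [single3_eq_V, V_sub_V]
      congr 1 <;> omega
    · rw [V_le_V]
      refine ⟨le_refl _, le_refl _, le_refl _, by omega⟩
  · intro j hj hjne
    have hj' : j < p := Finset.mem_range.mp hj
    by_cases hjp : j = p - 1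
    · rw [S4, if_pos hjp, if_neg]
      rw [V_le_V]
      rintro ⟨h0, -, -, -⟩
      omega
    · rw [S4, if_neg hjp, if_neg]
      rw [V_le_V]
      rintro ⟨-, h1, h2, -⟩
      have e1 : j + 1 ≤ p - r := Nat.le_of_mul_le_mul_left (by omega) hp
      have e2 : p - 1 - j ≤ r := Nat.le_of_mul_le_mul_left (by omega) hp
      omega
  · intro habs
    exact absurd (Finset.mem_range.mpr (by omega)) habs

lemma coeff_single3_L_mul (c0 cx cy cz cw : K) (m : ℕ) (v : MvPolynomial (Fin 4) K) :
    coeff (Finsupp.single 3 m) ((C c0 + C cx * X 0 + C cy * X 1 + C cz * X 2 + C cw * X 3) * v)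
      = c0 * coeff (Finsupp.single 3 m) v
        + (if m = 0 then 0 else cw * coeff (Finsupp.single 3 (m-1)) v) := by
  classical
  have hsupp : ∀ i : Fin 4, i ∈ (Finsupp.single (3 : Fin 4) m).support → i = 3 := by
    intro i hi
    rw [Finsupp.mem_support_iff, Finsupp.single_apply] at hi
    by_contra hne
    rw [if_neg (by exact fun hh => hne hh.symm)] at hi
    exact hi rfl
  rw [add_mul, add_mul, add_mul, add_mul, coeff_add, coeff_add, coeff_add, coeff_add,
    mul_assoc, mul_assoc, mul_assoc, mul_assoc, coeff_C_mul, coeff_C_mul, coeff_C_mul,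
    coeff_C_mul, coeff_C_mul, coeff_X_mul', coeff_X_mul', coeff_X_mul', coeff_X_mul']
  rw [if_neg (fun hh => by exact absurd (hsupp _ hh) (by decide)),
    if_neg (fun hh => by exact absurd (hsupp _ hh) (by decide)),
    if_neg (fun hh => by exact absurd (hsupp _ hh) (by decide))]
  rw [mul_zero, mul_zero, mul_zero, add_zero, add_zero, add_zero]
  by_cases hm : m = 0
  · rw [if_pos hm, if_neg, mul_zero, add_zero]
    rw [Finsupp.mem_support_iff, hm]
    simp
  · rw [if_neg hm, if_pos, ← Finsupp.single_tsub]
    rw [Finsupp.mem_support_iff, Finsupp.single_apply, if_pos rfl]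
    exact hm

lemma phi_fDim4 : phi p (fDim4 (K := K) p) = X 0 := by
  classical
  have hp : 0 < p := (Fact.out : p.Prime).pos
  ext m
  rw [coeff_phi, coeff_X']
  by_cases hm : Finsupp.single 0 1 = m
  · rw [if_pos hm, ← hm, single0_eq_V, smul_V_add_alF]
    have ha : p*1+(p-1) = 2*p-1 := by omega
    have hb : p*0+(p-1) = p-1 := by omega
    rw [ha, hb, fDim4_eq, coeff_sum, Finset.sum_eq_single (p-1)]
    · rw [S4, if_pos rfl, coeff_monomial, if_pos rfl, map_one]
    · intro j hj hjne
      rw [S4, if_neg hjne, coeff_monomial, if_neg]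
      intro hEq
      have h3 := DFunLike.congr_fun hEq (3 : Fin 4)
      rw [V_apply3, V_apply3] at h3
      exact hjne h3
    · intro habs
      exact absurd (Finset.mem_range.mpr (by omega)) habs
  · rw [if_neg hm, fDim4_eq, coeff_sum, Finset.sum_eq_zero, map_zero]
    intro j hj
    rw [coeff_monomial, if_neg]
    intro hEq
    by_cases hjp : j = p - 1
    · rw [S4, if_pos hjp] at hEq
      apply hm
      have h0 := DFunLike.congr_fun hEq 0
      have h1 := DFunLike.congr_fun hEq 1
      have h2 := DFunLike.congr_fun hEq 2
      have h3 := DFunLike.congr_fun hEq 3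
      rw [V_apply0, smul_add_alF_apply] at h0
      rw [V_apply1, smul_add_alF_apply] at h1
      rw [V_apply2, smul_add_alF_apply] at h2
      rw [V_apply3, smul_add_alF_apply] at h3
      have hm0 : m 0 = 1 := by
        refine Nat.eq_of_mul_eq_mul_left hp ?_
        omega
      have hm1 : m 1 = 0 := by
        refine Nat.eq_of_mul_eq_mul_left hp (?_ : p * m 1 = p * 0)
        omega
      have hm2 : m 2 = 0 := by
        refine Nat.eq_of_mul_eq_mul_left hp (?_ : p * m 2 = p * 0)
        omega
      have hm3 : m 3 = 0 := by
        refine Nat.eq_of_mul_eq_mul_left hp (?_ : p * m 3 = p * 0)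
        omega
      ext i
      fin_cases i <;> simp [Finsupp.single_apply] <;> omega
    · rw [S4, if_neg hjp] at hEq
      have h3 := DFunLike.congr_fun hEq 3
      rw [V_apply3, smul_add_alF_apply] at h3
      have hj' : j < p := Finset.mem_range.mp hj
      omega

end Dim4

/-- failure of the Kollár–Bertini theorem for test ideals: for the
4-dimensional example `f` and any `l = c₀ + c_x x + c_y y + c_z z + c_w w` with all
coefficients nonzero, `Φ(F_*(f·S)) ≠ Φ(F_*(f·l·S))`; in fact `x ∈ Φ(F_*(f·S))` but
`x ∉ Φ(F_*(f·l·S))`. -/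
theorem statement5 {K : Type*} [Field K] [Infinite K] (p : ℕ) [Fact p.Prime] [ExpChar K p]
    [PerfectRing K p] (c0 cx cy cz cw : K) (h0 : c0 ≠ 0) (hx : cx ≠ 0) (hy : cy ≠ 0)
    (hz : cz ≠ 0) (hw : cw ≠ 0) :
    tauP p (fDim4 (K := K) p) ≠
        tauP p (fDim4 (K := K) p * (C c0 + C cx * X 0 + C cy * X 1 + C cz * X 2 + C cw * X 3)) ∧
      (X 0 : MvPolynomial (Fin 4) K) ∈ tauP p (fDim4 (K := K) p) ∧
      (X 0 : MvPolynomial (Fin 4) K) ∉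
        tauP p (fDim4 (K := K) p * (C c0 + C cx * X 0 + C cy * X 1 + C cz * X 2 + C cw * X 3)) := by
  classical
  have hp : 0 < p := (Fact.out : p.Prime).pos
  set L : MvPolynomial (Fin 4) K := C c0 + C cx * X 0 + C cy * X 1 + C cz * X 2 + C cw * X 3
    with hLdef
  have hmem : (X 0 : MvPolynomial (Fin 4) K) ∈ tauP p (fDim4 (K := K) p) := by
    apply Ideal.subset_span
    exact ⟨1, by rw [mul_one, phi_fDim4]⟩
  have hnot : (X 0 : MvPolynomial (Fin 4) K) ∉ tauP p (fDim4 (K := K) p * L) := by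
    rw [tauP_eq]
    intro hx0
    obtain ⟨h, hEq⟩ := hx0
    set T : ℕ → K := fun k => coeff (Finsupp.single 3 k) h with hT
    have hb : p*0+(p-1) = p-1 := by omega
    have key : ∀ k : ℕ, c0 * T k + (if k = 0 then 0 else cw * T (k-1))
        = (if k = 0 then 1 else 0) := by
      intro k
      by_cases hr : k % p = 0
      · have e2 : coeff (p • V 1 0 0 (k/p) + alF p) (fDim4 (K := K) p * L * h)
            = frobeniusEquiv K p (coeff (V 1 0 0 (k/p)) (X 0 : MvPolynomial (Fin 4) K)) := by
          conv_rhs => rw [hEq]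
          rw [coeff_phi, RingEquiv.apply_symm_apply]
        have ha : p*1+(p-1) = 2*p-1 := by omega
        rw [smul_V_add_alF, ha, hb, mul_assoc, coeff_caseA, coeff_single3_L_mul,
          Nat.mul_div_cancel' (Nat.dvd_of_mod_eq_zero hr), coeff_X',
          apply_ite (frobeniusEquiv K p), map_one, map_zero] at e2
        by_cases hk0 : k = 0
        · subst hk0
          rw [if_pos rfl, if_pos rfl]
          rw [Nat.zero_div] at e2
          rw [if_pos rfl, if_pos single0_eq_V] at e2
          exact e2
        · have hsing : ¬ (Finsupp.single (0 : Fin 4) 1 = V 1 0 0 (k/p)) := by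
            intro hEq2
            have h3 := DFunLike.congr_fun hEq2 (3 : Fin 4)
            rw [V_apply3] at h3
            have hkp : p ≤ k := Nat.le_of_dvd (Nat.pos_of_ne_zero hk0)
              (Nat.dvd_of_mod_eq_zero hr)
            have hpos : 0 < k / p := Nat.div_pos hkp hp
            have h3' : Finsupp.single (0 : Fin 4) 1 (3 : Fin 4) = 0 := by
              simp [Finsupp.single_apply]
            omega
          rw [if_neg hk0, if_neg hk0]
          rw [if_neg hk0, if_neg hsing] at e2
          exact e2
      · set r := k % p with hrdef
        have hrlt : r < p := Nat.mod_lt _ hp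
        have hr1 : 1 ≤ r := Nat.one_le_iff_ne_zero.mpr hr
        have e2 : coeff (p • V 0 (p-r) r (k/p) + alF p) (fDim4 (K := K) p * L * h)
            = frobeniusEquiv K p (coeff (V 0 (p-r) r (k/p)) (X 0 : MvPolynomial (Fin 4) K)) := by
          conv_rhs => rw [hEq]
          rw [coeff_phi, RingEquiv.apply_symm_apply]
        have hn : p * (k/p) + r = k := Nat.div_add_mod k p
        have hk0 : k ≠ 0 := by omega
        have hsing : ¬ (Finsupp.single (0 : Fin 4) 1 = V 0 (p-r) r (k/p)) := by
          intro hEq2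
          have h2 := DFunLike.congr_fun hEq2 (2 : Fin 4)
          rw [V_apply2] at h2
          have h2' : Finsupp.single (0 : Fin 4) 1 (2 : Fin 4) = 0 := by
            simp [Finsupp.single_apply]
          omega
        rw [smul_V_add_alF, hb, mul_assoc, coeff_caseB p r (k/p) hr1 (by omega), hn,
          coeff_single3_L_mul, coeff_X', apply_ite (frobeniusEquiv K p), map_one, map_zero,
          if_neg hk0, if_neg hsing] at e2
        rw [if_neg hk0, if_neg hk0]
        exact e2
    have hTne : ∀ k, T k ≠ 0 := by
      intro k
      induction k with
      | zero =>
          have hk := key 0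
          rw [if_pos rfl, if_pos rfl, add_zero] at hk
          intro hc
          rw [hc, mul_zero] at hk
          exact zero_ne_one hk
      | succ k ih =>
          have hk := key (k+1)
          rw [if_neg (Nat.succ_ne_zero k), if_neg (Nat.succ_ne_zero k),
            Nat.add_sub_cancel] at hk
          intro hc
          rw [hc, mul_zero, zero_add] at hk
          exact ih ((mul_eq_zero.mp hk).resolve_left hw)
    have hBmem : Finsupp.single (3 : Fin 4) ((h.support.sup fun d => d 3) + 1) ∈ h.support :=
      Finsupp.mem_support_iff.mpr (hTne _)
    have hle : (Finsupp.single (3 : Fin 4) ((h.support.sup fun d => d 3) + 1)) 3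
        ≤ h.support.sup fun d => d 3 := Finset.le_sup (f := fun d : Fin 4 →₀ ℕ => d 3) hBmem
    rw [Finsupp.single_eq_same] at hle
    omega
  refine ⟨?_, hmem, hnot⟩
  intro hEq
  rw [hEq] at hmem
  exact hnot hmem
end
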